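/- Euler–Maclaurin first-order form: if f ∈ C¹[X, Y] with X < Y reals, then ∑_{X < n ≤ Y} f(n) = ∫_X^Y f(t) dt − ψ(Y)·f(Y) + ψ(X)·f(X) + ∫_X^Y ψ(t)·f'(t) dt, where ψ(t) = t − ⌊t⌋ − 1/2. -/
import Mathlib


open Real

noncomputable def psi (t : ℝ) : ℝ := t - ⌊t⌋ - 1 / 2

open MeasureTheory intervalIntegral in
lemma floor_mul_intervalIntegrable {X Y : ℝ} (f' : ℝ → ℝ)
    (hcont : ContinuousOn f' (Set.Icc X Y)) {a b : ℝ}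
    (hXa : X ≤ a) (hab : a ≤ b) (hbY : b ≤ Y) :
    IntervalIntegrable (fun t => (⌊t⌋ : ℝ) * f' t) volume a b := by
  have hsub : Set.Ioc a b ⊆ Set.Icc X Y := fun t ht =>
    ⟨hXa.trans ht.1.le, ht.2.trans hbY⟩
  have hf' : IntegrableOn f' (Set.Ioc a b) volume :=
    ((hcont.mono (Set.Icc_subset_Icc hXa hbY)).integrableOn_Icc).mono_set
      Set.Ioc_subset_Icc_self
  rw [intervalIntegrable_iff_integrableOn_Ioc_of_le hab]
  refine Integrable.mono' (g := fun t => (max |(⌊X⌋ : ℝ)| |(⌊Y⌋ : ℝ)|) * ‖f' t‖)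
    (hf'.norm.const_mul _) ?_ ?_
  · exact ((measurable_from_top.comp Int.measurable_floor).aestronglyMeasurable).mul
      ((hcont.mono hsub).aestronglyMeasurable measurableSet_Ioc)
  · refine (ae_restrict_iff' measurableSet_Ioc).2 (Filter.Eventually.of_forall ?_)
    intro t ht
    have h1 : (⌊X⌋ : ℝ) ≤ (⌊t⌋ : ℝ) := by
      exact_mod_cast Int.floor_le_floor (hXa.trans ht.1.le)
    have h2 : (⌊t⌋ : ℝ) ≤ (⌊Y⌋ : ℝ) := by
      exact_mod_cast Int.floor_le_floor (ht.2.trans hbY)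
    have : |(⌊t⌋ : ℝ)| ≤ max |(⌊X⌋ : ℝ)| |(⌊Y⌋ : ℝ)| := abs_le_max_abs_abs h1 h2
    calc ‖(⌊t⌋ : ℝ) * f' t‖ = |(⌊t⌋ : ℝ)| * ‖f' t‖ := by
          rw [norm_mul]; rfl
      _ ≤ _ := by
          exact mul_le_mul_of_nonneg_right this (norm_nonneg _)

open MeasureTheory intervalIntegral in
lemma key_floor_sum (k : ℕ) : ∀ (X Y : ℝ), X ≤ Y → (⌊Y⌋ - ⌊X⌋).toNat = k →
    ∀ (f f' : ℝ → ℝ), (∀ t ∈ Set.Icc X Y, HasDerivAt f (f' t) t) →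
    ContinuousOn f' (Set.Icc X Y) →
    ∑ n ∈ Finset.Ioc ⌊X⌋ ⌊Y⌋, f n =
      (⌊Y⌋ : ℝ) * f Y - (⌊X⌋ : ℝ) * f X - ∫ t in X..Y, (⌊t⌋ : ℝ) * f' t := by
  induction k with
  | zero =>
    intro X Y hXY hk f f' hderiv hcont
    have hle : ⌊X⌋ ≤ ⌊Y⌋ := Int.floor_le_floor hXY
    have heq : ⌊Y⌋ = ⌊X⌋ := by omega
    have hcongr : ∀ t ∈ Set.uIcc X Y, (⌊t⌋ : ℝ) * f' t = (⌊X⌋ : ℝ) * f' t := by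
      intro t ht
      rw [Set.uIcc_of_le hXY] at ht
      have hft : ⌊t⌋ = ⌊X⌋ := by
        rw [Int.floor_eq_iff]
        constructor
        · exact le_trans (Int.floor_le X) ht.1
        · calc t ≤ Y := ht.2
            _ < ⌊Y⌋ + 1 := Int.lt_floor_add_one Y
            _ = ⌊X⌋ + 1 := by rw [heq]
      rw [hft]
    have hint : IntervalIntegrable f' volume X Y :=
      hcont.intervalIntegrable_of_Icc hXY
    rw [intervalIntegral.integral_congr hcongr, intervalIntegral.integral_const_mul,
      intervalIntegral.integral_eq_sub_of_hasDerivAt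
        (fun t ht => hderiv t (by rwa [Set.uIcc_of_le hXY] at ht)) hint,
      heq]
    simp
    ring
  | succ k ih =>
    intro X Y hXY hk f f' hderiv hcont
    have hle : ⌊X⌋ ≤ ⌊Y⌋ := Int.floor_le_floor hXY
    have hlt : ⌊X⌋ < ⌊Y⌋ := by omega
    set c : ℝ := ((⌊X⌋ + 1 : ℤ) : ℝ) with hc
    have hfc : ⌊c⌋ = ⌊X⌋ + 1 := by rw [hc]; exact_mod_cast Int.floor_intCast _
    have hXc : X < c := by
      rw [hc]; push_cast; exact Int.lt_floor_add_one X
    have hcY : c ≤ Y := by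
      rw [hc]
      calc ((⌊X⌋ + 1 : ℤ) : ℝ) ≤ (⌊Y⌋ : ℝ) := by exact_mod_cast hlt
        _ ≤ Y := Int.floor_le Y
    -- right piece by induction
    have hright := ih c Y hcY (by rw [hfc]; omega) f f'
      (fun t ht => hderiv t ⟨hXc.le.trans ht.1, ht.2⟩)
      (hcont.mono (Set.Icc_subset_Icc_left hXc.le))
    -- left piece
    have hlcongr : ∀ᵐ t ∂(volume : Measure ℝ), t ∈ Set.uIoc X c →
        (⌊t⌋ : ℝ) * f' t = (⌊X⌋ : ℝ) * f' t := by
      have hne : ∀ᵐ t : ℝ ∂volume, t ≠ c := by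
        rw [MeasureTheory.ae_iff]
        have hset : {a : ℝ | ¬ a ≠ c} = {c} := by ext x; simp
        rw [hset]
        exact measure_singleton c
      filter_upwards [hne] with t htne ht
      rw [Set.uIoc_of_le hXc.le] at ht
      have htc : t < c := lt_of_le_of_ne ht.2 htne
      have hft : ⌊t⌋ = ⌊X⌋ := by
        rw [Int.floor_eq_iff]
        refine ⟨le_trans (Int.floor_le X) ht.1.le, ?_⟩
        calc t < c := htc
          _ = (⌊X⌋ : ℝ) + 1 := by rw [hc]; push_cast; ring
      rw [hft]
    have hfint : IntervalIntegrable f' volume X c :=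
      (hcont.mono (Set.Icc_subset_Icc_right hcY)).intervalIntegrable_of_Icc hXc.le
    have hleft : ∫ t in X..c, (⌊t⌋ : ℝ) * f' t = (⌊X⌋ : ℝ) * (f c - f X) := by
      rw [intervalIntegral.integral_congr_ae hlcongr,
        intervalIntegral.integral_const_mul,
        intervalIntegral.integral_eq_sub_of_hasDerivAt
          (fun t ht => hderiv t (by
            rw [Set.uIcc_of_le hXc.le] at ht
            exact ⟨ht.1, ht.2.trans hcY⟩)) hfint]
    -- additivity of the integral
    have hadd : (∫ t in X..c, (⌊t⌋ : ℝ) * f' t) + (∫ t in c..Y, (⌊t⌋ : ℝ) * f' t)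
        = ∫ t in X..Y, (⌊t⌋ : ℝ) * f' t :=
      intervalIntegral.integral_add_adjacent_intervals
        (floor_mul_intervalIntegrable f' hcont le_rfl hXc.le hcY)
        (floor_mul_intervalIntegrable f' hcont hXc.le hcY le_rfl)
    -- split the sum
    have hsplit : Finset.Ioc ⌊X⌋ ⌊Y⌋ = Finset.Ioc ⌊X⌋ (⌊X⌋ + 1) ∪ Finset.Ioc (⌊X⌋ + 1) ⌊Y⌋ :=
      (Finset.Ioc_union_Ioc_eq_Ioc (by omega) (by omega)).symm
    have hsingle : Finset.Ioc ⌊X⌋ (⌊X⌋ + 1) = {⌊X⌋ + 1} := by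
      ext x; simp [Finset.mem_Ioc]; omega
    have hdisj : Disjoint (Finset.Ioc ⌊X⌋ (⌊X⌋ + 1)) (Finset.Ioc (⌊X⌋ + 1) ⌊Y⌋) := by
      rw [Finset.disjoint_left]
      intro x hx hx'
      simp [Finset.mem_Ioc] at hx hx'
      omega
    rw [hsplit, Finset.sum_union hdisj, hsingle, Finset.sum_singleton]
    rw [hfc] at hright
    rw [show ((⌊X⌋ + 1 : ℤ) : ℝ) = c from rfl, hright, ← hadd, hleft]
    push_cast
    ring

theorem euler_maclaurin (X Y : ℝ) (hXY : X < Y)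
    (f f' : ℝ → ℝ)
    (hderiv : ∀ t ∈ Set.Icc X Y, HasDerivAt f (f' t) t)
    (hcont : ContinuousOn f' (Set.Icc X Y)) :
    ∑ n ∈ Finset.Ioc ⌊X⌋ ⌊Y⌋, f n =
      (∫ t in X..Y, f t) - psi Y * f Y + psi X * f X +
        ∫ t in X..Y, psi t * f' t := by
  have hXY' : X ≤ Y := hXY.le
  have hfint : IntervalIntegrable f' MeasureTheory.volume X Y :=
    hcont.intervalIntegrable_of_Icc hXY'
  have hfloorint : IntervalIntegrable (fun t => (⌊t⌋ : ℝ) * f' t)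
      MeasureTheory.volume X Y :=
    floor_mul_intervalIntegrable f' hcont le_rfl hXY' le_rfl
  have hlinint : IntervalIntegrable (fun t => (t - 1 / 2) * f' t)
      MeasureTheory.volume X Y := by
    apply ContinuousOn.intervalIntegrable
    exact (continuousOn_id.sub continuousOn_const).mul
      (hcont.mono (by rw [Set.uIcc_of_le hXY']))
  have hkey := key_floor_sum (⌊Y⌋ - ⌊X⌋).toNat X Y hXY' rfl f f' hderiv hcont
  -- integration by parts for (t - 1/2) * f' t
  have hparts : ∫ t in X..Y, (t - 1 / 2) * f' t
      = (Y - 1 / 2) * f Y - (X - 1 / 2) * f X - ∫ t in X..Y, f t := by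
    have h := intervalIntegral.integral_mul_deriv_eq_deriv_mul
      (u := fun t => t - 1 / 2) (u' := fun _ => (1 : ℝ))
      (v := f) (v' := f')
      (fun x _ => (hasDerivAt_id x).sub_const _)
      (fun x hx => hderiv x (by rwa [Set.uIcc_of_le hXY'] at hx))
      intervalIntegrable_const hfint
    simpa using h
  have hpsi : ∫ t in X..Y, psi t * f' t
      = (∫ t in X..Y, (t - 1 / 2) * f' t) - ∫ t in X..Y, (⌊t⌋ : ℝ) * f' t := by
    rw [← intervalIntegral.integral_sub hlinint hfloorint]
    apply intervalIntegral.integral_congr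
    intro t _
    simp only [psi]
    ring
  rw [hkey, hpsi, hparts]
  simp only [psi]
  ring
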